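/- arXiv:2301.03321 — 5 statements merged into one kernel-verified Lean document; each statement's English description precedes it below -/
import Mathlib

section
/- The minimizer of x ↦ max_{i} (‖x - p_i‖² - w(p_i)) over a real Hilbert space is unique. That is, if both c₀ and c₁ attain the minimum value r² of this function, then c₀ = c₁. -/
open Finset

theorem stmt2 {H : Type*} [NormedAddCommGroup H] [InnerProductSpace ℝ H] [CompleteSpace H]
    {ι : Type*} [Fintype ι] [Nonempty ι] (p : ι → H) (w : ι → ℝ) (c₀ c₁ : H)
    (h₀ : ∀ x : H,
      Finset.univ.sup' Finset.univ_nonempty (fun i => ‖c₀ - p i‖ ^ 2 - w i) ≤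
        Finset.univ.sup' Finset.univ_nonempty (fun i => ‖x - p i‖ ^ 2 - w i))
    (h₁ : ∀ x : H,
      Finset.univ.sup' Finset.univ_nonempty (fun i => ‖c₁ - p i‖ ^ 2 - w i) ≤
        Finset.univ.sup' Finset.univ_nonempty (fun i => ‖x - p i‖ ^ 2 - w i)) :
    c₀ = c₁ := by
  set r₀ := Finset.univ.sup' Finset.univ_nonempty (fun i => ‖c₀ - p i‖ ^ 2 - w i) with hr₀
  set r₁ := Finset.univ.sup' Finset.univ_nonempty (fun i => ‖c₁ - p i‖ ^ 2 - w i) with hr₁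
  have hrr : r₀ = r₁ := le_antisymm (h₀ c₁) (h₁ c₀)
  set m : H := (1/2 : ℝ) • (c₀ + c₁) with hm
  have hkey : Finset.univ.sup' Finset.univ_nonempty (fun i => ‖m - p i‖ ^ 2 - w i)
      ≤ r₀ - ‖c₀ - c₁‖ ^ 2 / 4 := by
    apply Finset.sup'_le
    intro i _
    have ha : ‖c₀ - p i‖ ^ 2 - w i ≤ r₀ := Finset.le_sup' (fun i => ‖c₀ - p i‖ ^ 2 - w i) (Finset.mem_univ i)
    have hb : ‖c₁ - p i‖ ^ 2 - w i ≤ r₀ := hrr ▸ Finset.le_sup' (fun i => ‖c₁ - p i‖ ^ 2 - w i) (Finset.mem_univ i)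
    have hpar : ‖(c₀ - p i) + (c₁ - p i)‖ * ‖(c₀ - p i) + (c₁ - p i)‖ +
        ‖(c₀ - p i) - (c₁ - p i)‖ * ‖(c₀ - p i) - (c₁ - p i)‖ =
        2 * (‖c₀ - p i‖ * ‖c₀ - p i‖ + ‖c₁ - p i‖ * ‖c₁ - p i‖) :=
      by have h := parallelogram_law_with_norm ℝ (c₀ - p i) (c₁ - p i); simp only [sq] at h; exact h
    have hmp : m - p i = (1/2 : ℝ) • ((c₀ - p i) + (c₁ - p i)) := by
      rw [hm]; module
    have hdiff : (c₀ - p i) - (c₁ - p i) = c₀ - c₁ := by abel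
    have hnm : ‖m - p i‖ ^ 2 = (1/4) * ‖(c₀ - p i) + (c₁ - p i)‖ ^ 2 := by
      rw [hmp, norm_smul, mul_pow]
      norm_num
    rw [hdiff] at hpar
    nlinarith [sq_nonneg ‖c₀ - c₁‖, sq_abs ‖c₀ - c₁‖]
  have := h₀ m
  have h4 : ‖c₀ - c₁‖ ^ 2 / 4 ≤ 0 := by linarith [le_trans this hkey]
  have : ‖c₀ - c₁‖ = 0 := by nlinarith [sq_nonneg ‖c₀ - c₁‖, norm_nonneg (c₀ - c₁)]
  exact sub_eq_zero.mp (norm_eq_zero.mp this)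
end

section
/- The center of the minimum enclosing power ball of a finite set of weighted points lies in the convex hull of the points attaining the maximum power distance from the center. More precisely, if c minimizes x ↦ max_i (‖x − p_i‖² − w(p_i)) over a real Hilbert space H, and I = {i : ‖c − p_i‖² − w(p_i) = r²} where r² is the minimum value, then c ∈ conv{p_i : i ∈ I}. -/
open Finset

theorem stmt4 {H : Type*} [NormedAddCommGroup H] [InnerProductSpace ℝ H] [CompleteSpace H]
    {ι : Type*} [Fintype ι] [Nonempty ι] (p : ι → H) (w : ι → ℝ) (c : H)
    (hc : ∀ x : H,
      Finset.univ.sup' Finset.univ_nonempty (fun i => ‖c - p i‖ ^ 2 - w i) ≤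
        Finset.univ.sup' Finset.univ_nonempty (fun i => ‖x - p i‖ ^ 2 - w i)) :
    c ∈ convexHull ℝ
      (p '' {i | ‖c - p i‖ ^ 2 - w i =
        Finset.univ.sup' Finset.univ_nonempty (fun j => ‖c - p j‖ ^ 2 - w j)}) := by
  classical
  set r2 := Finset.univ.sup' Finset.univ_nonempty (fun j => ‖c - p j‖ ^ 2 - w j) with hr2
  by_contra hcon
  set I : Set ι := {i | ‖c - p i‖ ^ 2 - w i = r2} with hI
  have hSfin : (p '' I).Finite := (Set.toFinite I).image p
  have hclosed : IsClosed (convexHull ℝ (p '' I)) := (hSfin.isCompact_convexHull ℝ).isClosed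
  obtain ⟨f, u, hfc, hfs⟩ :=
    geometric_hahn_banach_point_closed (convex_convexHull ℝ _) hclosed hcon
  set v := (InnerProductSpace.toDual ℝ H).symm f with hv
  have hvf : ∀ y : H, (inner ℝ v y : ℝ) = f y := fun y =>
    InnerProductSpace.toDual_symm_apply
  set ε := u - f c with hε
  have hεpos : 0 < ε := by simp only [hε]; linarith
  set B := ‖v‖ ^ 2 with hB
  have hBpos : 0 ≤ B := sq_nonneg _
  have hle : ∀ i, ‖c - p i‖ ^ 2 - w i ≤ r2 := fun i =>
    Finset.le_sup' (fun j => ‖c - p j‖ ^ 2 - w j) (Finset.mem_univ i)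
  set b : ι → ℝ := fun i => if i ∈ I then ε / (B + 1)
    else (r2 - (‖c - p i‖ ^ 2 - w i)) / (2 * |f c - f (p i)| + B + 1) with hb
  have hbpos : ∀ i, 0 < b i := by
    intro i
    by_cases h : i ∈ I
    · simp only [hb, h, if_true]; positivity
    · simp only [hb, h, if_false]
      have h1 : ‖c - p i‖ ^ 2 - w i < r2 := lt_of_le_of_ne (hle i) h
      have h2 : 0 < r2 - (‖c - p i‖ ^ 2 - w i) := by linarith
      positivity
  set T := min 1 (Finset.univ.inf' Finset.univ_nonempty b) with hT
  have hTpos : 0 < T :=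
    lt_min one_pos ((Finset.lt_inf'_iff _).2 fun i _ => hbpos i)
  have hT1 : T ≤ 1 := min_le_left _ _
  have hTb : ∀ i, T ≤ b i := fun i =>
    le_trans (min_le_right _ _) (Finset.inf'_le _ (Finset.mem_univ i))
  have hexp : ∀ i, ‖c + T • v - p i‖ ^ 2 - w i
      = (‖c - p i‖ ^ 2 - w i) + 2 * T * (f c - f (p i)) + T ^ 2 * B := by
    intro i
    have h1 : c + T • v - p i = (c - p i) + T • v := by abel
    rw [h1, norm_add_sq_real]
    have h2 : (inner ℝ (c - p i) (T • v) : ℝ) = T * (f c - f (p i)) := by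
      rw [real_inner_smul_right, real_inner_comm, hvf, map_sub]
    rw [h2, norm_smul, Real.norm_eq_abs, abs_of_pos hTpos]
    simp only [hB]; ring
  have hlt : ∀ i, ‖c + T • v - p i‖ ^ 2 - w i < r2 := by
    intro i
    rw [hexp i]
    by_cases h : i ∈ I
    · have hpi : u < f (p i) := hfs _ (subset_convexHull ℝ _ ⟨i, h, rfl⟩)
      have ha : f c - f (p i) < -ε := by simp only [hε]; linarith
      have heq : ‖c - p i‖ ^ 2 - w i = r2 := h
      have hTle : T ≤ ε / (B + 1) := by
        have := hTb i; simpa only [hb, h, if_true] using this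
      have hTB : T * B < 2 * ε := by
        have h3 : T * (B + 1) ≤ ε := by
          rw [← le_div_iff₀ (by positivity)]; exact hTle
        nlinarith
      have hneg : 2 * T * (f c - f (p i)) + T ^ 2 * B < 0 := by nlinarith
      linarith
    · have h1 : ‖c - p i‖ ^ 2 - w i < r2 := lt_of_le_of_ne (hle i) h
      have hTbi : T ≤ (r2 - (‖c - p i‖ ^ 2 - w i)) / (2 * |f c - f (p i)| + B + 1) := by
        have := hTb i; simpa only [hb, h, if_false] using this
      have h2 : T * (2 * |f c - f (p i)| + B + 1) ≤ r2 - (‖c - p i‖ ^ 2 - w i) := by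
        rw [← le_div_iff₀ (by positivity)]; exact hTbi
      have habs : f c - f (p i) ≤ |f c - f (p i)| := le_abs_self _
      have e1 : 2 * T * (f c - f (p i)) ≤ 2 * T * |f c - f (p i)| :=
        mul_le_mul_of_nonneg_left habs (by linarith)
      have e2 : T ^ 2 * B ≤ T * B := by nlinarith [mul_nonneg hTpos.le hBpos]
      have e3 : T * (2 * |f c - f (p i)| + B) < T * (2 * |f c - f (p i)| + B + 1) := by
        nlinarith [hTpos]
      nlinarith [abs_nonneg (f c - f (p i))]
  have hmain := hc (c + T • v)
  have h2 : Finset.univ.sup' Finset.univ_nonempty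
      (fun i => ‖c + T • v - p i‖ ^ 2 - w i) < r2 :=
    (Finset.sup'_lt_iff _).2 fun i _ => hlt i
  linarith
end

section
/- (Decomposition Lemma) If c is the center of the minimum enclosing power ball of weighted points {(p_i, w(p_i))} in a real Hilbert space, with squared radius r² = max_i (‖c − p_i‖² − w(p_i)), and I is the set of indices attaining this maximum, then there exist nonnegative reals (λ_i)_{i∈I} with ∑_{i∈I} λ_i = 1, c = ∑_{i∈I} λ_i p_i, and r² = (1/2) ∑_{i,j∈I} λ_i λ_j (‖p_i − p_j‖² − w(p_i) − w(p_j)). -/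
open Finset
open scoped InnerProductSpace

private lemma expand_aux {H : Type*} [NormedAddCommGroup H] [InnerProductSpace ℝ H]
    (a d : H) (t : ℝ) : ‖a - t • d‖ ^ 2 = ‖a‖ ^ 2 - 2 * t * ⟪a, d⟫_ℝ + t ^ 2 * ‖d‖ ^ 2 := by
  rw [norm_sub_sq_real, real_inner_smul_right, norm_smul, mul_pow, Real.norm_eq_abs, sq_abs]
  ring

theorem stmt5 {H : Type*} [NormedAddCommGroup H] [InnerProductSpace ℝ H] [CompleteSpace H]
    {ι : Type*} [Fintype ι] [Nonempty ι] (p : ι → H) (w : ι → ℝ) (c : H)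
    (hc : ∀ x : H,
      Finset.univ.sup' Finset.univ_nonempty (fun i => ‖c - p i‖ ^ 2 - w i) ≤
        Finset.univ.sup' Finset.univ_nonempty (fun i => ‖x - p i‖ ^ 2 - w i)) :
    ∃ l : ι → ℝ, (∀ i, 0 ≤ l i) ∧
      (∀ i, (‖c - p i‖ ^ 2 - w i ≠
        Finset.univ.sup' Finset.univ_nonempty (fun j => ‖c - p j‖ ^ 2 - w j)) → l i = 0) ∧
      (∑ i, l i = 1) ∧ (c = ∑ i, l i • p i) ∧
      Finset.univ.sup' Finset.univ_nonempty (fun j => ‖c - p j‖ ^ 2 - w j) =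
        (1 / 2) * ∑ i, ∑ j, l i * l j * (‖p i - p j‖ ^ 2 - w i - w j) := by
  classical
  set r2 : ℝ := Finset.univ.sup' Finset.univ_nonempty (fun i => ‖c - p i‖ ^ 2 - w i) with hr2
  set A : Finset ι := Finset.univ.filter (fun i => ‖c - p i‖ ^ 2 - w i = r2) with hA
  have hle : ∀ i, ‖c - p i‖ ^ 2 - w i ≤ r2 := fun i =>
    Finset.le_sup' (fun i => ‖c - p i‖ ^ 2 - w i) (Finset.mem_univ i)
  have hAne : A.Nonempty := by
    obtain ⟨i, _, hi⟩ := Finset.exists_mem_eq_sup' Finset.univ_nonempty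
      (fun i => ‖c - p i‖ ^ 2 - w i)
    exact ⟨i, by simp [hA, hi.symm]; exact hr2.symm⟩
  -- the key claim: c is in the convex hull of the active points
  have hkey : c ∈ convexHull ℝ ((A.image p : Finset H) : Set H) := by
    by_contra hcK
    set K : Set H := ((A.image p : Finset H) : Set H)
    have hKconv : Convex ℝ (convexHull ℝ K) := convex_convexHull ℝ K
    have hKne : (convexHull ℝ K).Nonempty := by
      obtain ⟨i0, hi0⟩ := hAne
      exact ⟨p i0, subset_convexHull ℝ K (by simp [K, Finset.mem_image]; exact ⟨i0, hi0, rfl⟩)⟩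
    have hKcompact : IsCompact (convexHull ℝ K) :=
      (Finset.finite_toSet _).isCompact_convexHull ℝ
    obtain ⟨q, hqK, hq⟩ := exists_norm_eq_iInf_of_complete_convex hKne
      (hKcompact.isClosed.isComplete) hKconv c
    have hproj : ∀ y ∈ convexHull ℝ K, ⟪c - q, y - q⟫_ℝ ≤ 0 :=
      (norm_eq_iInf_iff_real_inner_le_zero hKconv hqK).mp hq
    set d : H := c - q with hd
    have hdne : d ≠ 0 := sub_ne_zero.mpr (fun h => hcK (h ▸ hqK))
    set δ : ℝ := ‖d‖ ^ 2 with hδ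
    have hδpos : 0 < δ := by
      have : 0 < ‖d‖ := norm_pos_iff.mpr hdne
      positivity
    -- for active i, ⟪c - p i, d⟫ ≥ δ
    have hact : ∀ i ∈ A, δ ≤ ⟪c - p i, d⟫_ℝ := by
      intro i hi
      have hpiK : p i ∈ convexHull ℝ K :=
        subset_convexHull ℝ K (by simp [K, Finset.mem_image]; exact ⟨i, hi, rfl⟩)
      have h1 : ⟪c - q, p i - q⟫_ℝ ≤ 0 := hproj _ hpiK
      have h2 : ⟪d, c - p i⟫_ℝ = ⟪d, d⟫_ℝ - ⟪c - q, p i - q⟫_ℝ := by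
        rw [hd]
        rw [← inner_sub_right]
        congr 1
        abel
      rw [real_inner_comm, h2, real_inner_self_eq_norm_sq]
      linarith
    -- choose the step size
    set M : ι → ℝ := fun i => 2 * ‖d‖ * ‖c - p i‖ + δ + 1 with hM
    have hMpos : ∀ i, 0 < M i := by intro i; have := norm_nonneg d; have := norm_nonneg (c - p i); positivity
    set g : ι → ℝ := fun i => r2 - (‖c - p i‖ ^ 2 - w i) with hg
    have hgpos : ∀ i ∉ A, 0 < g i := by
      intro i hi
      have : ‖c - p i‖ ^ 2 - w i ≠ r2 := by
        intro h; exact hi (by simp [hA, h])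
      have := hle i
      simp only [hg]
      cases lt_or_eq_of_le this with
      | inl h => linarith
      | inr h => exact absurd h ‹_›
    set t : ι → ℝ := fun i => if i ∈ A then 1 else min 1 (g i / (2 * M i)) with ht
    have htpos : ∀ i, 0 < t i := by
      intro i
      simp only [ht]
      split
      · exact one_pos
      · exact lt_min one_pos (div_pos (hgpos i (by assumption)) (by linarith [hMpos i]))
    set T : ℝ := Finset.univ.inf' Finset.univ_nonempty t with hT
    have hTpos : 0 < T := by
      obtain ⟨i, _, hi⟩ := Finset.exists_mem_eq_inf' Finset.univ_nonempty t
      rw [hT, hi]; exact htpos i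
    have hTle : ∀ i, T ≤ t i := fun i => Finset.inf'_le t (Finset.mem_univ i)
    have hT1 : T ≤ 1 := by
      obtain ⟨i0⟩ := (inferInstance : Nonempty ι)
      refine le_trans (hTle i0) ?_
      simp only [ht]; split
      · exact le_refl 1
      · exact min_le_left _ _
    -- evaluate at x = c - T • d
    have hexp : ∀ i, ‖(c - T • d) - p i‖ ^ 2 - w i =
        (‖c - p i‖ ^ 2 - w i) - 2 * T * ⟪c - p i, d⟫_ℝ + T ^ 2 * δ := by
      intro i
      have : (c - T • d) - p i = (c - p i) - T • d := by abel
      rw [this, expand_aux]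
      ring
    have hlt : ∀ i, ‖(c - T • d) - p i‖ ^ 2 - w i < r2 := by
      intro i
      rw [hexp i]
      by_cases hi : i ∈ A
      · have h1 : ‖c - p i‖ ^ 2 - w i = r2 := (Finset.mem_filter.mp hi).2
        have h2 := hact i hi
        have hTT : T ^ 2 * δ ≤ T * δ := by nlinarith [mul_nonneg (mul_nonneg hTpos.le (sub_nonneg.mpr hT1)) hδpos.le]
        have h2' : 2 * T * δ ≤ 2 * T * ⟪c - p i, d⟫_ℝ := by
          have := mul_le_mul_of_nonneg_left h2 (by linarith : (0:ℝ) ≤ 2 * T); linarith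
        have h3 : 0 < T * δ := mul_pos hTpos hδpos
        linarith
      · have h1 := hgpos i hi
        have h2 : |⟪c - p i, d⟫_ℝ| ≤ ‖c - p i‖ * ‖d‖ := abs_real_inner_le_norm _ _
        have h3 : T ≤ g i / (2 * M i) := le_trans (hTle i) (by simp only [ht, if_neg hi]; exact min_le_right _ _)
        have h4 := hMpos i
        have h5 : T * (2 * M i) ≤ g i := by
          have h5a := mul_le_mul_of_nonneg_right h3 (by linarith : (0:ℝ) ≤ 2 * M i)
          rwa [div_mul_cancel₀ _ (by linarith : (2 : ℝ) * M i ≠ 0)] at h5a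
        have h6 : -(‖c - p i‖ * ‖d‖) ≤ ⟪c - p i, d⟫_ℝ := neg_le_of_abs_le h2
        have h7 : T ^ 2 * δ ≤ T * δ := by nlinarith [mul_nonneg (mul_nonneg hTpos.le (sub_nonneg.mpr hT1)) hδpos.le]
        have h8 : g i = r2 - (‖c - p i‖ ^ 2 - w i) := rfl
        have h9 : M i = 2 * ‖d‖ * ‖c - p i‖ + δ + 1 := rfl
        nlinarith [mul_le_mul_of_nonneg_left h6 (by linarith : (0:ℝ) ≤ 2 * T), h5, h7, hTpos,
          mul_nonneg (norm_nonneg (c - p i)) (norm_nonneg d)]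
    have := hc (c - T • d)
    have hsup : Finset.univ.sup' Finset.univ_nonempty
        (fun i => ‖(c - T • d) - p i‖ ^ 2 - w i) < r2 :=
      (Finset.sup'_lt_iff Finset.univ_nonempty).mpr (fun i _ => hlt i)
    linarith
  -- extract the weights
  rw [Finset.mem_convexHull'] at hkey
  obtain ⟨v, hv0, hv1, hvc⟩ := hkey
  have hrep : ∀ y ∈ A.image p, ∃ i, i ∈ A ∧ p i = y := by
    intro y hy
    obtain ⟨i, hi, hpi⟩ := Finset.mem_image.mp hy
    exact ⟨i, hi, hpi⟩
  choose! rep hrepA hrepP using hrep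
  set l : ι → ℝ := fun i => ∑ y ∈ (A.image p).filter (fun y => rep y = i), v y with hl
  have hl0 : ∀ i, 0 ≤ l i := by
    intro i
    apply Finset.sum_nonneg
    intro y hy
    exact hv0 y (Finset.mem_filter.mp hy).1
  have hlzero : ∀ i ∉ A, l i = 0 := by
    intro i hi
    apply Finset.sum_eq_zero
    intro y hy
    obtain ⟨hy1, hy2⟩ := Finset.mem_filter.mp hy
    exact absurd (hy2 ▸ hrepA y hy1) hi
  have hmaps : ∀ y ∈ A.image p, rep y ∈ (Finset.univ : Finset ι) := fun y _ => Finset.mem_univ _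
  have hlsum : ∑ i, l i = 1 := by
    rw [hl]
    rw [Finset.sum_fiberwise_of_maps_to hmaps v]
    exact hv1
  have hlc : c = ∑ i, l i • p i := by
    have : ∀ i, l i • p i = ∑ y ∈ (A.image p).filter (fun y => rep y = i), v y • y := by
      intro i
      rw [hl]
      rw [Finset.sum_smul]
      refine Finset.sum_congr rfl fun y hy => ?_
      obtain ⟨hy1, hy2⟩ := Finset.mem_filter.mp hy
      rw [← hy2, hrepP y hy1]
    rw [Finset.sum_congr rfl (fun i _ => this i)]
    rw [Finset.sum_fiberwise_of_maps_to hmaps (fun y => v y • y)]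
    exact hvc.symm
  refine ⟨l, hl0, ?_, hlsum, hlc, ?_⟩
  · intro i hi
    exact hlzero i (fun h => hi (Finset.mem_filter.mp h).2)
  · -- the radius identity
    have hzero : ∑ i, l i • (c - p i) = 0 := by
      simp only [smul_sub, Finset.sum_sub_distrib, ← Finset.sum_smul, hlsum, one_smul]
      rw [← hlc]; abel
    have hactive : ∀ i, l i ≠ 0 → ‖c - p i‖ ^ 2 - w i = r2 := by
      intro i hi
      by_contra h
      exact hi (hlzero i (fun hmem => h (Finset.mem_filter.mp hmem).2))
    have key2 : ∀ i j, l i * l j * (‖p i - p j‖ ^ 2 - w i - w j) =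
        2 * r2 * (l i * l j) - 2 * (l i * l j * ⟪c - p i, c - p j⟫_ℝ) := by
      intro i j
      by_cases hi : l i = 0
      · simp [hi]
      by_cases hj : l j = 0
      · simp [hj]
      have hia := hactive i hi
      have hja := hactive j hj
      have hdiff : p i - p j = (c - p j) - (c - p i) := by abel
      rw [hdiff, norm_sub_sq_real, real_inner_comm]
      linear_combination l i * l j * hia + l i * l j * hja
    have hinner : ∑ i, ∑ j, l i * l j * ⟪c - p i, c - p j⟫_ℝ = 0 := by
      have : ∑ i, ∑ j, l i * l j * ⟪c - p i, c - p j⟫_ℝ =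
          ⟪∑ i, l i • (c - p i), ∑ j, l j • (c - p j)⟫_ℝ := by
        rw [sum_inner]
        refine Finset.sum_congr rfl fun i _ => ?_
        rw [real_inner_smul_left, inner_sum, Finset.mul_sum]
        refine Finset.sum_congr rfl fun j _ => ?_
        rw [real_inner_smul_right]; ring
      rw [this, hzero, inner_zero_left]
    have e1 : ∑ i, ∑ j, 2 * r2 * (l i * l j) = 2 * r2 * ((∑ i, l i) * (∑ j, l j)) := by
      simp only [Finset.mul_sum, Finset.sum_mul]
      exact Finset.sum_congr rfl fun i _ => Finset.sum_congr rfl fun j _ => by ring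
    have e2 : ∑ i, ∑ j, 2 * (l i * l j * ⟪c - p i, c - p j⟫_ℝ) =
        2 * ∑ i, ∑ j, l i * l j * ⟪c - p i, c - p j⟫_ℝ := by
      simp [Finset.mul_sum]
    have main : ∑ i, ∑ j, l i * l j * (‖p i - p j‖ ^ 2 - w i - w j) = 2 * r2 := by
      calc ∑ i, ∑ j, l i * l j * (‖p i - p j‖ ^ 2 - w i - w j)
          = ∑ i, ∑ j, (2 * r2 * (l i * l j) - 2 * (l i * l j * ⟪c - p i, c - p j⟫_ℝ)) :=
            Finset.sum_congr rfl fun i _ => Finset.sum_congr rfl fun j _ => key2 i j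
        _ = (∑ i, ∑ j, 2 * r2 * (l i * l j)) -
            ∑ i, ∑ j, 2 * (l i * l j * ⟪c - p i, c - p j⟫_ℝ) := by
            simp only [Finset.sum_sub_distrib]
        _ = 2 * r2 * ((∑ i, l i) * (∑ j, l j)) -
            2 * ∑ i, ∑ j, l i * l j * ⟪c - p i, c - p j⟫_ℝ := by rw [e1, e2]
        _ = 2 * r2 := by rw [hlsum, hinner]; ring
    rw [main]
    ring
end

section
/- If for all i the quantity ‖c − p_i‖² − w(p_i) equals the same value r², and c = ∑_{i∈I} λ_i p_i is a convex combination, then r² = ∑_{i∈I} λ_i (‖c − p_i‖² − w(p_i)) = (1/2) ∑_{i,j∈I} λ_i λ_j D(p̂_i, p̂_j), where D(p̂_i, p̂_j) = ‖p_i − p_j‖² − w(p_i) − w(p_j). -/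
open Finset
open scoped RealInnerProductSpace

theorem stmt6 {H : Type*} [NormedAddCommGroup H] [InnerProductSpace ℝ H]
    {ι : Type*} [Fintype ι] (p : ι → H) (w : ι → ℝ) (r2 : ℝ)
    (l : ι → ℝ) (hl : ∀ i, 0 ≤ l i) (hsum : ∑ i, l i = 1)
    (c : H) (hc : c = ∑ i, l i • p i)
    (hr : ∀ i, ‖c - p i‖ ^ 2 - w i = r2) :
    r2 = ∑ i, l i * (‖c - p i‖ ^ 2 - w i) ∧
      r2 = (1 / 2) * ∑ i, ∑ j, l i * l j * (‖p i - p j‖ ^ 2 - w i - w j) := by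
  have h1 : r2 = ∑ i, l i * (‖c - p i‖ ^ 2 - w i) := by
    simp only [hr, ← Finset.sum_mul, hsum, one_mul]
  refine ⟨h1, ?_⟩
  have hzero : ∑ i, l i • (c - p i) = 0 := by
    simp only [smul_sub, Finset.sum_sub_distrib, ← Finset.sum_smul, hsum, one_smul, ← hc,
      sub_self]
  have hinner : ∑ i, ∑ j, l i * l j * (inner ℝ (c - p j) (c - p i) : ℝ) = 0 := by
    have := congrArg (fun x => (inner ℝ x x : ℝ)) hzero
    simp only [inner_zero_right, sum_inner, inner_sum, real_inner_smul_left,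
      real_inner_smul_right] at this
    rw [← this]
    apply Finset.sum_congr rfl; intro i _
    apply Finset.sum_congr rfl; intro j _
    rw [real_inner_comm]; ring
  have hexp : ∀ i j, ‖p i - p j‖ ^ 2 - w i - w j
      = 2 * r2 - 2 * (inner ℝ (c - p j) (c - p i) : ℝ) := by
    intro i j
    have : p i - p j = (c - p j) - (c - p i) := by abel
    have hi := hr i; have hj := hr j
    rw [this, norm_sub_sq_real]
    linarith
  have h2 : ∑ i, ∑ j, l i * l j * (‖p i - p j‖ ^ 2 - w i - w j) = 2 * r2 := by
    have key : ∀ i, ∑ j, l i * l j * (‖p i - p j‖ ^ 2 - w i - w j)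
        = l i * (2 * r2) - 2 * ∑ j, l i * l j * (inner ℝ (c - p j) (c - p i) : ℝ) := by
      intro i
      calc ∑ j, l i * l j * (‖p i - p j‖ ^ 2 - w i - w j)
          = ∑ j, ((2 * r2 * l i) * l j
              - 2 * (l i * l j * (inner ℝ (c - p j) (c - p i) : ℝ))) := by
            apply Finset.sum_congr rfl; intro j _; rw [hexp]; ring
        _ = (2 * r2 * l i) * ∑ j, l j
              - 2 * ∑ j, l i * l j * (inner ℝ (c - p j) (c - p i) : ℝ) := by
            rw [Finset.sum_sub_distrib, ← Finset.mul_sum, ← Finset.mul_sum]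
        _ = _ := by rw [hsum]; ring
    calc ∑ i, ∑ j, l i * l j * (‖p i - p j‖ ^ 2 - w i - w j)
        = ∑ i, (l i * (2 * r2)
            - 2 * ∑ j, l i * l j * (inner ℝ (c - p j) (c - p i) : ℝ)) :=
          Finset.sum_congr rfl (fun i _ => key i)
      _ = (∑ i, l i) * (2 * r2)
            - 2 * ∑ i, ∑ j, l i * l j * (inner ℝ (c - p j) (c - p i) : ℝ) := by
          rw [Finset.sum_sub_distrib, ← Finset.sum_mul, ← Finset.mul_sum]
      _ = 2 * r2 := by rw [hsum, hinner]; ring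
  rw [h2]; ring
end

section
/- (Simplex Distortion) Suppose points p_1,…,p_k lie in a real Hilbert space H with weights w_i, and q_1,…,q_k lie in a real Hilbert space H' with weights w'_i, and for all i, j: (1−ε) D(p̂_i,p̂_j) ≤ D'(q̂_i,q̂_j) ≤ (1+ε) D(p̂_i,p̂_j), where D(p̂_i,p̂_j) = ‖p_i − p_j‖² − w_i − w_j ≥ 0 and similarly for D'. Then the squared weighted radii satisfy (1−ε)·rad²({p̂_i}) ≤ rad²({q̂_i}) ≤ (1+ε)·rad²({p̂_i}), where rad²({p̂_i}) = min_{x∈H} max_i (‖x − p_i‖² − w_i). -/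
open Finset

lemma identE {E : Type*} [NormedAddCommGroup E] [InnerProductSpace ℝ E] {ι : Type*} [Fintype ι]
    (p : ι → E) (w lam : ι → ℝ) (hs : ∑ i, lam i = 1) (x : E) :
    ∑ i, lam i * (‖x - p i‖ ^ 2 - w i) =
      ‖x - ∑ i, lam i • p i‖ ^ 2 +
        (1/2) * ∑ i, ∑ j, lam i * lam j * (‖p i - p j‖ ^ 2 - w i - w j) := by
  have hn : ∀ a b : E, ‖a - b‖ ^ 2 = ‖a‖ ^ 2 - 2 * inner ℝ a b + ‖b‖ ^ 2 := fun a b => by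
    rw [@norm_sub_sq_real E]
  set b := ∑ i, lam i • p i with hb
  have hxb : (inner ℝ x b : ℝ) = ∑ i, lam i * inner ℝ x (p i) := by
    rw [hb, inner_sum]; exact Finset.sum_congr rfl fun i _ => real_inner_smul_right _ _ _
  have hbb : ‖b‖ ^ 2 = ∑ i, ∑ j, lam i * lam j * inner ℝ (p i) (p j) := by
    rw [← real_inner_self_eq_norm_sq, hb, sum_inner]
    refine Finset.sum_congr rfl fun i _ => ?_
    rw [real_inner_smul_left, inner_sum, Finset.mul_sum]
    refine Finset.sum_congr rfl fun j _ => ?_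
    rw [real_inner_smul_right]; ring
  have h1 : ∑ i, lam i * (‖x - p i‖ ^ 2 - w i)
      = ‖x‖ ^ 2 - 2 * (inner ℝ x b : ℝ) + ∑ i, lam i * (‖p i‖ ^ 2 - w i) := by
    have e : ∀ i, lam i * (‖x - p i‖ ^ 2 - w i)
        = lam i * ‖x‖ ^ 2 - 2 * (lam i * inner ℝ x (p i)) + lam i * (‖p i‖ ^ 2 - w i) := by
      intro i; rw [hn]; ring
    simp_rw [e, Finset.sum_add_distrib, Finset.sum_sub_distrib, ← Finset.sum_mul, hs, one_mul,
      ← Finset.mul_sum, hxb]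
  have hQ1 : ∑ i, ∑ j, lam i * lam j * (‖p i‖ ^ 2 - w i) = ∑ i, lam i * (‖p i‖ ^ 2 - w i) := by
    refine Finset.sum_congr rfl fun i _ => ?_
    have e : ∀ j, lam i * lam j * (‖p i‖ ^ 2 - w i) = (lam i * (‖p i‖ ^ 2 - w i)) * lam j :=
      fun j => by ring
    simp_rw [e, ← Finset.mul_sum, hs, mul_one]
  have hQ2 : ∑ i, ∑ j, lam i * lam j * (‖p j‖ ^ 2 - w j) = ∑ i, lam i * (‖p i‖ ^ 2 - w i) := by
    rw [Finset.sum_comm]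
    refine Finset.sum_congr rfl fun j _ => ?_
    have e : ∀ i, lam i * lam j * (‖p j‖ ^ 2 - w j) = (lam j * (‖p j‖ ^ 2 - w j)) * lam i :=
      fun i => by ring
    simp_rw [e, ← Finset.mul_sum, hs, mul_one]
  have h2 : ∑ i, ∑ j, lam i * lam j * (‖p i - p j‖ ^ 2 - w i - w j)
      = 2 * ∑ i, lam i * (‖p i‖ ^ 2 - w i) - 2 * ‖b‖ ^ 2 := by
    have e : ∀ i j, lam i * lam j * (‖p i - p j‖ ^ 2 - w i - w j)
        = lam i * lam j * (‖p i‖ ^ 2 - w i) + lam i * lam j * (‖p j‖ ^ 2 - w j)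
          - 2 * (lam i * lam j * inner ℝ (p i) (p j)) := by
      intro i j; rw [hn]; ring
    simp_rw [e, Finset.sum_sub_distrib, Finset.sum_add_distrib, ← Finset.mul_sum]
    rw [hQ1, hQ2, ← hbb]; ring
  have h3 : ‖x - b‖ ^ 2 = ‖x‖ ^ 2 - 2 * (inner ℝ x b : ℝ) + ‖b‖ ^ 2 := hn x b
  linear_combination h1 - h3 - (1/2) * h2

lemma Tle {E : Type*} [NormedAddCommGroup E] [InnerProductSpace ℝ E] {ι : Type*} [Fintype ι]
    [Nonempty ι] (p : ι → E) (w lam : ι → ℝ) (hnn : ∀ i, 0 ≤ lam i) (hs : ∑ i, lam i = 1)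
    (x : E) :
    (1/2) * ∑ i, ∑ j, lam i * lam j * (‖p i - p j‖ ^ 2 - w i - w j) ≤
      Finset.univ.sup' Finset.univ_nonempty (fun i => ‖x - p i‖ ^ 2 - w i) := by
  have h1 := identE p w lam hs x
  have h2 : ∑ i, lam i * (‖x - p i‖ ^ 2 - w i) ≤
      Finset.univ.sup' Finset.univ_nonempty (fun i => ‖x - p i‖ ^ 2 - w i) := by
    calc ∑ i, lam i * (‖x - p i‖ ^ 2 - w i)
        ≤ ∑ i, lam i * Finset.univ.sup' Finset.univ_nonempty (fun i => ‖x - p i‖ ^ 2 - w i) :=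
          Finset.sum_le_sum fun i _ => mul_le_mul_of_nonneg_left
            (Finset.le_sup' (fun i => ‖x - p i‖ ^ 2 - w i) (Finset.mem_univ i)) (hnn i)
      _ = _ := by rw [← Finset.sum_mul, hs, one_mul]
  nlinarith [sq_nonneg (‖x - ∑ i, lam i • p i‖)]


lemma exists_kkt {E : Type*} [NormedAddCommGroup E] [InnerProductSpace ℝ E] {ι : Type*}
    [Fintype ι] [Nonempty ι] (p : ι → E) (w : ι → ℝ) (c : E)
    (hc : ∀ x : E, Finset.univ.sup' Finset.univ_nonempty (fun i => ‖c - p i‖ ^ 2 - w i) ≤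
        Finset.univ.sup' Finset.univ_nonempty (fun i => ‖x - p i‖ ^ 2 - w i)) :
    ∃ lam : ι → ℝ, (∀ i, 0 ≤ lam i) ∧ (∑ i, lam i = 1) ∧ (∑ i, lam i • p i = c) ∧
      ∑ i, lam i * (‖c - p i‖ ^ 2 - w i) =
        Finset.univ.sup' Finset.univ_nonempty (fun i => ‖c - p i‖ ^ 2 - w i) := by
  classical
  set g : ι → ℝ := fun i => ‖c - p i‖ ^ 2 - w i with hg
  set r : ℝ := Finset.univ.sup' Finset.univ_nonempty g with hr
  set S : Finset ι := Finset.univ.filter (fun i => g i = r) with hS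
  obtain ⟨i0, -, hi0⟩ := Finset.exists_mem_eq_sup' Finset.univ_nonempty g
  have hi0S : i0 ∈ S := by
    rw [hS, Finset.mem_filter]; exact ⟨Finset.mem_univ _, hi0.symm⟩
  set K : Set E := convexHull ℝ (↑(S.image p)) with hK
  have hKcompact : IsCompact K := (S.image p).finite_toSet.isCompact_convexHull ℝ
  have hKconv : Convex ℝ K := convex_convexHull ℝ _
  have hKne : K.Nonempty := ⟨p i0, subset_convexHull ℝ _ (by simp [Finset.mem_image]; exact ⟨i0, hi0S, rfl⟩)⟩
  -- main claim: c ∈ K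
  have hcK : c ∈ K := by
    by_contra hcK
    obtain ⟨b, hbK, hbmin⟩ := hKcompact.exists_isMinOn hKne
      (Continuous.continuousOn (by continuity : Continuous fun y : E => ‖c - y‖))
    have hbne : b ≠ c := fun h => hcK (h ▸ hbK)
    set d : E := b - c with hd
    have hdpos : 0 < ‖d‖ ^ 2 :=
      pow_pos (norm_pos_iff.mpr (sub_ne_zero.mpr hbne)) 2
    -- variational inequality
    haveI : Nonempty K := hKne.to_subtype
    have hproj : ∀ y ∈ K, (inner ℝ (c - b) (y - b) : ℝ) ≤ 0 := by
      rw [← norm_eq_iInf_iff_real_inner_le_zero hKconv hbK]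
      have hbdd : BddBelow (Set.range fun y : K => ‖c - (y : E)‖) := by
        refine ⟨0, ?_⟩
        rintro x ⟨y, rfl⟩
        exact norm_nonneg _
      exact le_antisymm (le_ciInf fun ⟨y, hy⟩ => hbmin hy) (ciInf_le hbdd ⟨b, hbK⟩)
    have hinner : ∀ i ∈ S, ‖d‖ ^ 2 ≤ (inner ℝ d (p i - c) : ℝ) := by
      intro i hi
      have hpK : p i ∈ K := subset_convexHull ℝ _ (by
        simp only [Finset.coe_image, Set.mem_image, Finset.mem_coe]; exact ⟨i, hi, rfl⟩)
      have h0 := hproj (p i) hpK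
      have e : (inner ℝ d (p i - c) : ℝ) = -(inner ℝ (c - b) (p i - b) : ℝ) + ‖d‖ ^ 2 := by
        rw [← real_inner_self_eq_norm_sq]
        have : d = -(c - b) := by rw [hd]; abel
        rw [this]; simp [inner_neg_left, inner_sub_right, inner_sub_left]; rw [@norm_sub_sq_real E, real_inner_comm c b]; ring
      rw [e]; linarith
    -- per-index small step
    have hstep : ∀ i : ι, ∃ ti : ℝ, 0 < ti ∧ ∀ t : ℝ, 0 < t → t < ti → g i + 2 * t * (inner ℝ (c - p i) d : ℝ) + t ^ 2 * ‖d‖ ^ 2 < r := by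
      intro i
      by_cases hiS : i ∈ S
      · refine ⟨1, one_pos, fun t ht ht1 => ?_⟩
        have hgi : g i = r := (Finset.mem_filter.mp hiS).2
        have h1 : (inner ℝ (c - p i) d : ℝ) ≤ -‖d‖ ^ 2 := by
          have := hinner i hiS
          have e : (inner ℝ (c - p i) d : ℝ) = -(inner ℝ d (p i - c) : ℝ) := by
            rw [real_inner_comm, ← inner_neg_right]
            congr 1
            abel
          rw [e]; linarith
        have hmul : t * (inner ℝ (c - p i) d : ℝ) ≤ t * (-‖d‖ ^ 2) :=
          mul_le_mul_of_nonneg_left h1 ht.le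
        have htt : t ^ 2 < t := by nlinarith
        have ht2 : t ^ 2 * ‖d‖ ^ 2 < t * ‖d‖ ^ 2 := mul_lt_mul_of_pos_right htt hdpos
        have ht3 : 0 < t * ‖d‖ ^ 2 := mul_pos ht hdpos
        linarith
      · have hgi : g i < r := by
          have hle : g i ≤ r := Finset.le_sup' g (Finset.mem_univ i)
          have : g i ≠ r := by
            intro h; exact hiS (Finset.mem_filter.mpr ⟨Finset.mem_univ i, h⟩)
          exact lt_of_le_of_ne hle this
        set C : ℝ := 2 * |(inner ℝ (c - p i) d : ℝ)| + ‖d‖ ^ 2 + 1 with hC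
        have hCpos : 0 < C := by positivity
        refine ⟨min 1 ((r - g i) / C), lt_min one_pos (div_pos (by linarith) hCpos),
          fun t ht htm => ?_⟩
        have ht1 : t < 1 := lt_of_lt_of_le htm (min_le_left _ _)
        have ht2 : t < (r - g i) / C := lt_of_lt_of_le htm (min_le_right _ _)
        have htC : t * C < r - g i := by
          rw [lt_div_iff₀ hCpos] at ht2; linarith
        have habs : (inner ℝ (c - p i) d : ℝ) ≤ |(inner ℝ (c - p i) d : ℝ)| := le_abs_self _
        have hA : t * (inner ℝ (c - p i) d : ℝ) ≤ t * |(inner ℝ (c - p i) d : ℝ)| :=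
          mul_le_mul_of_nonneg_left habs ht.le
        have hB : t ^ 2 * ‖d‖ ^ 2 ≤ t * ‖d‖ ^ 2 :=
          mul_le_mul_of_nonneg_right (by nlinarith) (sq_nonneg _)
        have htCexp : t * C = 2 * (t * |(inner ℝ (c - p i) d : ℝ)|) + t * ‖d‖ ^ 2 + t := by
          rw [hC]; ring
        linarith
    choose ti hti hti' using hstep
    set tm : ℝ := Finset.univ.inf' Finset.univ_nonempty ti with htm
    have htmpos : 0 < tm := by
      rw [htm, Finset.lt_inf'_iff]; exact fun i _ => hti i
    set t : ℝ := tm / 2 with ht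
    have htpos : 0 < t := by positivity
    have htlt : ∀ i, t < ti i := fun i =>
      lt_of_lt_of_le (by linarith) (Finset.inf'_le ti (Finset.mem_univ i))
    have hexp : ∀ i, ‖(c + t • d) - p i‖ ^ 2 - w i
        = g i + 2 * t * (inner ℝ (c - p i) d : ℝ) + t ^ 2 * ‖d‖ ^ 2 := by
      intro i
      have e : (c + t • d) - p i = (c - p i) + t • d := by abel
      rw [e, @norm_add_sq_real E, real_inner_smul_right, norm_smul]
      simp [hg, abs_of_pos htpos, mul_pow]
      ring
    have hlt : Finset.univ.sup' Finset.univ_nonempty (fun i => ‖(c + t • d) - p i‖ ^ 2 - w i) < r := by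
      rw [Finset.sup'_lt_iff]
      intro i _
      rw [hexp i]
      exact hti' i t htpos (htlt i)
    exact absurd (hc (c + t • d)) (not_le.mpr hlt)
  -- extract weights
  rw [hK, Finset.convexHull_eq, Set.mem_setOf_eq] at hcK
  obtain ⟨W, hW0, hW1, hWc⟩ := hcK
  rw [Finset.centerMass_eq_of_sum_1 _ _ hW1] at hWc
  simp only [id] at hWc
  -- representative index
  have hrep : ∀ y ∈ S.image p, ∃ i ∈ S, p i = y := fun y hy => by
    simpa [Finset.mem_image] using hy
  choose rep hrepS hrepP using fun y (hy : y ∈ S.image p) => hrep y hy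
  set lam : ι → ℝ := fun i =>
    ∑ y ∈ (S.image p).attach.filter (fun y => rep y.1 y.2 = i), W y.1 with hlam
  have hlnn : ∀ i, 0 ≤ lam i := fun i =>
    Finset.sum_nonneg fun y _ => hW0 y.1 y.2
  have hl1 : ∑ i, lam i = 1 := by
    rw [hlam]
    simp only
    have hmaps : ∀ y ∈ (S.image p).attach, rep y.1 y.2 ∈ (Finset.univ : Finset ι) :=
      fun y _ => Finset.mem_univ _
    rw [Finset.sum_fiberwise_of_maps_to hmaps (fun y => W y.1),
      Finset.sum_attach _ (fun y => W y), hW1]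
  have hsupp : ∀ i, lam i ≠ 0 → g i = r := by
    intro i hne
    rw [hlam] at hne
    obtain ⟨y, hy, -⟩ := Finset.exists_ne_zero_of_sum_ne_zero hne
    have := Finset.mem_filter.mp hy
    have hiS : i ∈ S := this.2 ▸ hrepS y.1 y.2
    exact (Finset.mem_filter.mp hiS).2
  have hlc : ∑ i, lam i • p i = c := by
    rw [hlam]
    simp only
    have e : ∀ i : ι, (∑ y ∈ (S.image p).attach.filter (fun y => rep y.1 y.2 = i), W y.1) • p i
        = ∑ y ∈ (S.image p).attach.filter (fun y => rep y.1 y.2 = i), W y.1 • y.1 := by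
      intro i
      rw [Finset.sum_smul]
      refine Finset.sum_congr rfl fun y hy => ?_
      have hyi : rep y.1 y.2 = i := (Finset.mem_filter.mp hy).2
      rw [← hyi, hrepP y.1 y.2]
    simp_rw [e]
    have hmaps : ∀ y ∈ (S.image p).attach, rep y.1 y.2 ∈ (Finset.univ : Finset ι) :=
      fun y _ => Finset.mem_univ _
    rw [Finset.sum_fiberwise_of_maps_to hmaps (fun y => W y.1 • y.1),
      Finset.sum_attach _ (fun y => W y • y)]
    exact hWc
  refine ⟨lam, hlnn, hl1, hlc, ?_⟩
  calc ∑ i, lam i * (‖c - p i‖ ^ 2 - w i) = ∑ i, lam i * r := by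
        refine Finset.sum_congr rfl fun i _ => ?_
        by_cases h : lam i = 0
        · rw [h]; ring
        · rw [show ‖c - p i‖ ^ 2 - w i = g i from rfl, hsupp i h]
    _ = r := by rw [← Finset.sum_mul, hl1, one_mul]


theorem stmt9 {H H' : Type*} [NormedAddCommGroup H] [InnerProductSpace ℝ H] [CompleteSpace H]
    [NormedAddCommGroup H'] [InnerProductSpace ℝ H'] [CompleteSpace H']
    {ι : Type*} [Fintype ι] [Nonempty ι]
    (p : ι → H) (q : ι → H') (w w' : ι → ℝ)
    (ε : ℝ) (hε : ε ∈ Set.Ioo (0 : ℝ) 1)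
    (hDnn : ∀ i j, 0 ≤ ‖p i - p j‖ ^ 2 - w i - w j)
    (hlo : ∀ i j, (1 - ε) * (‖p i - p j‖ ^ 2 - w i - w j) ≤ ‖q i - q j‖ ^ 2 - w' i - w' j)
    (hhi : ∀ i j, ‖q i - q j‖ ^ 2 - w' i - w' j ≤ (1 + ε) * (‖p i - p j‖ ^ 2 - w i - w j))
    (cp : H) (cq : H')
    (hcp : ∀ x : H,
      Finset.univ.sup' Finset.univ_nonempty (fun i => ‖cp - p i‖ ^ 2 - w i) ≤
        Finset.univ.sup' Finset.univ_nonempty (fun i => ‖x - p i‖ ^ 2 - w i))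
    (hcq : ∀ x : H',
      Finset.univ.sup' Finset.univ_nonempty (fun i => ‖cq - q i‖ ^ 2 - w' i) ≤
        Finset.univ.sup' Finset.univ_nonempty (fun i => ‖x - q i‖ ^ 2 - w' i)) :
    (1 - ε) * Finset.univ.sup' Finset.univ_nonempty (fun i => ‖cp - p i‖ ^ 2 - w i) ≤
      Finset.univ.sup' Finset.univ_nonempty (fun i => ‖cq - q i‖ ^ 2 - w' i) ∧
    Finset.univ.sup' Finset.univ_nonempty (fun i => ‖cq - q i‖ ^ 2 - w' i) ≤
      (1 + ε) * Finset.univ.sup' Finset.univ_nonempty (fun i => ‖cp - p i‖ ^ 2 - w i) := by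
  obtain ⟨lam, hlnn, hl1, hlc, hlr⟩ := exists_kkt p w cp hcp
  obtain ⟨mu, hmnn, hm1, hmc, hmr⟩ := exists_kkt q w' cq hcq
  set rP : ℝ := Finset.univ.sup' Finset.univ_nonempty (fun i => ‖cp - p i‖ ^ 2 - w i) with hrP
  set rQ : ℝ := Finset.univ.sup' Finset.univ_nonempty (fun i => ‖cq - q i‖ ^ 2 - w' i) with hrQ
  -- rP equals the half double sum for lam
  have hP : rP = (1/2) * ∑ i, ∑ j, lam i * lam j * (‖p i - p j‖ ^ 2 - w i - w j) := by
    have h := identE p w lam hl1 cp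
    rw [hlc, sub_self, norm_zero] at h
    rw [← hlr, h]
    ring
  have hQ : rQ = (1/2) * ∑ i, ∑ j, mu i * mu j * (‖q i - q j‖ ^ 2 - w' i - w' j) := by
    have h := identE q w' mu hm1 cq
    rw [hmc, sub_self, norm_zero] at h
    rw [← hmr, h]
    ring
  obtain ⟨hε0, hε1⟩ := hε
  constructor
  · -- lower bound
    have step1 : (1 - ε) * rP ≤
        (1/2) * ∑ i, ∑ j, lam i * lam j * (‖q i - q j‖ ^ 2 - w' i - w' j) := by
      rw [hP]
      have hterm : ∀ i j, (1 - ε) * (lam i * lam j * (‖p i - p j‖ ^ 2 - w i - w j))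
          ≤ lam i * lam j * (‖q i - q j‖ ^ 2 - w' i - w' j) := by
        intro i j
        have := mul_le_mul_of_nonneg_left (hlo i j) (mul_nonneg (hlnn i) (hlnn j))
        nlinarith [this]
      calc (1 - ε) * ((1/2) * ∑ i, ∑ j, lam i * lam j * (‖p i - p j‖ ^ 2 - w i - w j))
          = (1/2) * ∑ i, ∑ j, (1 - ε) * (lam i * lam j * (‖p i - p j‖ ^ 2 - w i - w j)) := by
            simp_rw [Finset.mul_sum]
            exact Finset.sum_congr rfl fun i _ => Finset.sum_congr rfl fun j _ => by ring
        _ ≤ (1/2) * ∑ i, ∑ j, lam i * lam j * (‖q i - q j‖ ^ 2 - w' i - w' j) := by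
            refine mul_le_mul_of_nonneg_left ?_ (by norm_num)
            exact Finset.sum_le_sum fun i _ => Finset.sum_le_sum fun j _ => hterm i j
    exact step1.trans (Tle q w' lam hlnn hl1 cq)
  · -- upper bound
    have step1 : rQ ≤
        (1 + ε) * ((1/2) * ∑ i, ∑ j, mu i * mu j * (‖p i - p j‖ ^ 2 - w i - w j)) := by
      rw [hQ]
      have hterm : ∀ i j, mu i * mu j * (‖q i - q j‖ ^ 2 - w' i - w' j)
          ≤ (1 + ε) * (mu i * mu j * (‖p i - p j‖ ^ 2 - w i - w j)) := by
        intro i j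
        have := mul_le_mul_of_nonneg_left (hhi i j) (mul_nonneg (hmnn i) (hmnn j))
        nlinarith [this]
      calc (1/2) * ∑ i, ∑ j, mu i * mu j * (‖q i - q j‖ ^ 2 - w' i - w' j)
          ≤ (1/2) * ∑ i, ∑ j, (1 + ε) * (mu i * mu j * (‖p i - p j‖ ^ 2 - w i - w j)) := by
            refine mul_le_mul_of_nonneg_left ?_ (by norm_num)
            exact Finset.sum_le_sum fun i _ => Finset.sum_le_sum fun j _ => hterm i j
        _ = (1 + ε) * ((1/2) * ∑ i, ∑ j, mu i * mu j * (‖p i - p j‖ ^ 2 - w i - w j)) := by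
            simp_rw [Finset.mul_sum]
            exact Finset.sum_congr rfl fun i _ => Finset.sum_congr rfl fun j _ => by ring
    refine step1.trans ?_
    exact mul_le_mul_of_nonneg_left (Tle p w mu hmnn hm1 cp) (by linarith)
end
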